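/- Let (S_n) be a random walk on ℤ with S_0 = 0 and jumps (J_k) satisfying P(J_1 ∈ 2ℤ) < 1. Define stopping times T_0 := 0 and T_n := inf{k > T_{n−1} : S_k ∈ 2ℤ} for n ≥ 1. Then P(T_n < ∞) = 1 for every n ≥ 1. -/

import Mathlib

open MeasureTheory Filter ProbabilityTheory

private lemma aux_even_sum (J : ℕ → ℤ)
    (h : ∀ t : ℕ, ∃ k, t ≤ k ∧ ¬ (2:ℤ) ∣ J k) (t : ℕ) :
    ∃ m : ℕ, t < m ∧ (2:ℤ) ∣ ∑ i ∈ Finset.range m, J i := by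
  by_cases h1 : (2:ℤ) ∣ ∑ i ∈ Finset.range (t+1), J i
  · exact ⟨t+1, Nat.lt_succ_self t, h1⟩
  · have hex : ∃ k, t+1 ≤ k ∧ ¬ (2:ℤ) ∣ J k := h (t+1)
    classical
    obtain ⟨hk1, hk2⟩ := Nat.find_spec hex
    have hmid : (2:ℤ) ∣ ∑ i ∈ Finset.Ico (t+1) (Nat.find hex), J i := by
      refine Finset.dvd_sum fun i hi => ?_
      rw [Finset.mem_Ico] at hi
      have := Nat.find_min hex hi.2
      by_contra hd
      exact this ⟨hi.1, hd⟩
    refine ⟨Nat.find hex + 1, by omega, ?_⟩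
    have hdecomp : ∑ i ∈ Finset.range (Nat.find hex + 1), J i =
        ∑ i ∈ Finset.range (t+1), J i + ∑ i ∈ Finset.Ico (t+1) (Nat.find hex), J i
          + J (Nat.find hex) := by
      rw [Finset.sum_range_succ]
      congr 1
      rw [Finset.range_eq_Ico, Finset.range_eq_Ico]
      exact (Finset.sum_Ico_consecutive (f := J) (Nat.zero_le _) hk1).symm
    rw [hdecomp]
    omega
theorem hitting_times_of_even_integers_finite
    {Ω : Type*} [MeasurableSpace Ω] (P : Measure Ω) [IsProbabilityMeasure P]
    (J : ℕ → Ω → ℤ) (hmeas : ∀ k, Measurable (J k))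
    (hindep : iIndepFun J P)
    (hident : ∀ k, Measure.map (J k) P = Measure.map (J 0) P)
    (heven : P {ω | (2 : ℤ) ∣ J 0 ω} < 1)
    (T : ℕ → Ω → ℕ∞)
    (hT0 : ∀ ω, T 0 ω = 0)
    (hTsucc : ∀ n ω, T (n + 1) ω =
      sInf {k : ℕ∞ | ∃ m : ℕ, k = (m : ℕ∞) ∧ T n ω < (m : ℕ∞) ∧
        (2 : ℤ) ∣ ∑ i ∈ Finset.range m, J i ω}) :
    ∀ n : ℕ, 1 ≤ n → P {ω | T n ω < ⊤} = 1 := by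
  classical
  set O : Set ℤ := {x | ¬ (2:ℤ) ∣ x} with hO_def
  have hO : MeasurableSet O := MeasurableSet.of_discrete
  set s : ℕ → Set Ω := fun k => J k ⁻¹' O with hs_def
  have hsm : ∀ k, MeasurableSet (s k) := fun k => (hmeas k) hO
  -- independence of the sets
  have hcomp : iIndepFun
      (fun k => (fun x => x ∈ O) ∘ J k) P :=
    hindep.comp _ (fun _ => measurable_of_countable _)
  have hsi : iIndepSet s P := by
    rw [← iIndep_comap_mem_iff]
    exact hcomp
  -- identical probabilities
  have hPs : ∀ k, P (s k) = P (s 0) := by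
    intro k
    have h1 : P (s k) = (Measure.map (J k) P) O :=
      (Measure.map_apply (hmeas k) hO).symm
    have h2 : P (s 0) = (Measure.map (J 0) P) O :=
      (Measure.map_apply (hmeas 0) hO).symm
    rw [h1, h2, hident k]
  have hpos : P (s 0) ≠ 0 := by
    have hc : s 0 = {ω | (2:ℤ) ∣ J 0 ω}ᶜ := rfl
    have hm : MeasurableSet {ω | (2:ℤ) ∣ J 0 ω} :=
      (hmeas 0) (MeasurableSet.of_discrete (s := {x : ℤ | (2:ℤ) ∣ x}))
    rw [hc, measure_compl hm (measure_ne_top _ _), measure_univ]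
    intro h0
    rw [tsub_eq_zero_iff_le] at h0
    exact absurd h0 (not_le.mpr heven)
  have htsum : ∑' k, P (s k) = ⊤ := by
    calc ∑' k, P (s k) = ∑' (_ : ℕ), P (s 0) := by simp_rw [hPs]
    _ = ⊤ := ENNReal.tsum_const_eq_top_of_ne_zero hpos
  have hlim : P (limsup s atTop) = 1 := measure_limsup_eq_one hsm hsi htsum
  -- on the limsup, all T n are finite
  have hsub : ∀ ω ∈ limsup s atTop, ∀ n, T n ω < ⊤ := by
    intro ω hω
    have hfreq : ∀ t : ℕ, ∃ k, t ≤ k ∧ ¬ (2:ℤ) ∣ J k ω := by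
      have := Filter.frequently_atTop.mp
        ((Filter.mem_limsup_iff_frequently_mem).mp hω)
      intro t
      obtain ⟨k, hk1, hk2⟩ := this t
      exact ⟨k, hk1, hk2⟩
    intro n
    induction n with
    | zero => simp [hT0]
    | succ n ih =>
      obtain ⟨t, ht⟩ : ∃ t : ℕ, T n ω = (t : ℕ∞) := by
        cases h : T n ω with
        | top => rw [h] at ih; exact absurd ih (lt_irrefl _)
        | coe t => exact ⟨t, rfl⟩
      obtain ⟨m, hm, hdvd⟩ := aux_even_sum (fun i => J i ω) hfreq t
      have hmem : (m : ℕ∞) ∈ {k : ℕ∞ | ∃ m' : ℕ, k = (m' : ℕ∞) ∧ T n ω < (m' : ℕ∞) ∧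
          (2 : ℤ) ∣ ∑ i ∈ Finset.range m', J i ω} :=
        ⟨m, rfl, by rw [ht]; exact_mod_cast hm, hdvd⟩
      rw [hTsucc n ω]
      exact lt_of_le_of_lt (sInf_le hmem) (WithTop.coe_lt_top m)
  intro n _
  refine le_antisymm prob_le_one ?_
  calc (1 : ENNReal) = P (limsup s atTop) := hlim.symm
  _ ≤ P {ω | T n ω < ⊤} := measure_mono (fun ω hω => hsub ω hω n)
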